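/- The set of parameter vectors p ∈ ℝ^d for which a given spanning tree T is the unique minimum spanning tree under edge weights w(e) = cost(e)·p is exactly the set of solutions of the system of strict linear inequalities (cost(f) − cost(e))·p > 0 over all swaps (e,f) of T; in particular this set is a convex (open polyhedral) subset of ℝ^d. -/

import Mathlib

open SimpleGraph

/-- Dot product on `ℝ^d`. -/
def dot {d : ℕ} (x y : Fin d → ℝ) : ℝ := ∑ i, x i * y i

/-- `T` is a spanning tree of `G`. -/
def IsSpanningTree {V : Type*} (G T : SimpleGraph V) : Prop :=
  T ≤ G ∧ T.IsTree

/-- `(e, f)` is a swap for the spanning tree `T` of `G`. -/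
def IsSwap {V : Type*} (G T : SimpleGraph V) (e f : Sym2 V) : Prop :=
  e ∈ T.edgeSet ∧ f ∈ G.edgeSet ∧ f ∉ T.edgeSet ∧
    IsSpanningTree G (SimpleGraph.fromEdgeSet ((insert f T.edgeSet) \ {e}))

open scoped Classical in
/-- Total weight of (the edges of) a graph under the parametric weights
`w(e) = cost(e) · p`. -/
noncomputable def paramWeight {V : Type*} [Fintype V] {d : ℕ} (T : SimpleGraph V)
    (cost : Sym2 V → Fin d → ℝ) (p : Fin d → ℝ) : ℝ :=
  ∑ e ∈ T.edgeFinset, dot (cost e) p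

namespace MSTAux

variable {V : Type*}

lemma dot_sub {d : ℕ} (x y p : Fin d → ℝ) : dot (x - y) p = dot x p - dot y p := by
  simp [dot, sub_mul, Finset.sum_sub_distrib]

lemma dot_isLinearMap {d : ℕ} (c : Fin d → ℝ) :
    IsLinearMap ℝ (fun p : Fin d → ℝ => dot c p) := by
  constructor
  · intro u v
    simp [dot, mul_add, Finset.sum_add_distrib]
  · intro r u
    simp [dot, Finset.mul_sum, smul_eq_mul]
    ring_nf
    simp [mul_comm, mul_left_comm]

lemma reach_transfer {A B : SimpleGraph V}
    (h : ∀ x y, A.Adj x y → B.Reachable x y) {u v : V} (r : A.Reachable u v) :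
    B.Reachable u v := by
  obtain ⟨w⟩ := r
  induction w with
  | nil => exact Reachable.refl _
  | cons hadj _ ih => exact (h _ _ hadj).trans ih

lemma exists_cross {A : SimpleGraph V} (P : V → Prop) {a b : V} (w : A.Walk a b)
    (ha : P a) (hb : ¬ P b) :
    ∃ u v, A.Adj u v ∧ s(u, v) ∈ w.edges ∧ P u ∧ ¬ P v := by
  induction w with
  | nil => exact absurd ha hb
  | @cons a c b hadj rest ih =>
    by_cases hc : P c
    · obtain ⟨u, v, h1, h2, h3, h4⟩ := ih hc hb
      exact ⟨u, v, h1, by simp [h2], h3, h4⟩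
    · exact ⟨a, c, hadj, by simp, ha, hc⟩

lemma sides_aux {A : SimpleGraph V} {x y : V} {a b : V} (w : A.Walk a b)
    (hb : (A \ fromEdgeSet {s(x, y)}).Reachable b x ∨
      (A \ fromEdgeSet {s(x, y)}).Reachable b y) :
    (A \ fromEdgeSet {s(x, y)}).Reachable a x ∨
      (A \ fromEdgeSet {s(x, y)}).Reachable a y := by
  induction w with
  | nil => exact hb
  | @cons a c _ hadj rest ih =>
    have hc := ih hb
    by_cases hec : s(a, c) = s(x, y)
    · rw [Sym2.eq_iff] at hec
      rcases hec with ⟨rfl, rfl⟩ | ⟨rfl, rfl⟩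
      · exact Or.inl (Reachable.refl _)
      · exact Or.inr (Reachable.refl _)
    · have hAdj : (A \ fromEdgeSet {s(x, y)}).Adj a c := by
        rw [sdiff_adj]
        refine ⟨hadj, ?_⟩
        rw [fromEdgeSet_adj]
        rintro ⟨h1, -⟩
        exact hec (by simpa using h1)
      rcases hc with h | h
      · exact Or.inl (hAdj.reachable.trans h)
      · exact Or.inr (hAdj.reachable.trans h)

/-- After deleting an edge of a connected graph every vertex can still reach
one of the two endpoints. -/
lemma sides {A : SimpleGraph V} (hA : A.Preconnected) (x y a : V) :
    (A \ fromEdgeSet {s(x, y)}).Reachable a x ∨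
      (A \ fromEdgeSet {s(x, y)}).Reachable a y := by
  obtain ⟨w⟩ := hA a x
  exact sides_aux w (Or.inl (Reachable.refl _))

/-- Deleting a non-bridge edge preserves connectivity. -/
lemma connected_sdiff_of_walk {H : SimpleGraph V} (hconn : H.Connected)
    {v w : V} (q : H.Walk v w) (hq : s(v, w) ∉ q.edges) :
    (H \ fromEdgeSet {s(v, w)}).Connected := by
  have hne : Nonempty V := hconn.nonempty
  have hreach : (H \ fromEdgeSet {s(v, w)}).Reachable v w :=
    reachable_delete_edges_iff_exists_walk.mpr ⟨q, hq⟩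
  refine Connected.mk ?_
  intro a b
  refine reach_transfer (fun x y hxy => ?_) (hconn.preconnected a b)
  by_cases hxe : s(x, y) = s(v, w)
  · rw [Sym2.eq_iff] at hxe
    rcases hxe with ⟨rfl, rfl⟩ | ⟨rfl, rfl⟩
    · exact hreach
    · exact hreach.symm
  · refine Adj.reachable ?_
    rw [sdiff_adj]
    refine ⟨hxy, ?_⟩
    rw [fromEdgeSet_adj]
    rintro ⟨h1, -⟩
    exact hxe (by simpa using h1)

lemma ncard_sdiff_edge [Fintype V] (H : SimpleGraph V) {v w : V} (h : H.Adj v w) :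
    (H \ fromEdgeSet {s(v, w)}).edgeSet.ncard = H.edgeSet.ncard - 1 := by
  rw [show (H \ fromEdgeSet {s(v, w)}).edgeSet = H.edgeSet \ {s(v, w)} from
    edgeSet_deleteEdges _]
  exact Set.ncard_diff_singleton_of_mem h

lemma ncard_eq_card_edgeFinset [Fintype V] (H : SimpleGraph V)
    [Fintype H.edgeSet] : H.edgeSet.ncard = H.edgeFinset.card := by
  rw [edgeFinset, Set.ncard_eq_toFinset_card']

/-- A connected graph on `n` vertices has at least `n - 1` edges. -/
lemma card_le_of_connected [Fintype V] :
    ∀ n (H : SimpleGraph V), H.edgeSet.ncard = n → H.Connected →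
      Fintype.card V ≤ n + 1 := by
  classical
  intro n
  induction n using Nat.strong_induction_on with
  | _ n IH =>
    intro H hcard hconn
    by_cases hac : H.IsAcyclic
    · have h1 := (SimpleGraph.IsTree.mk hconn hac).card_edgeFinset
      rw [← ncard_eq_card_edgeFinset] at h1
      omega
    · rw [isAcyclic_iff_forall_adj_isBridge] at hac
      push_neg at hac
      obtain ⟨v, w, hadj, hnb⟩ := hac
      rw [isBridge_iff_adj_and_forall_walk_mem_edges] at hnb
      push_neg at hnb
      obtain ⟨q, hq⟩ := hnb
      have hKconn := connected_sdiff_of_walk hconn q hq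
      have hKcard := ncard_sdiff_edge H hadj
      have hn : 0 < n := by
        rw [← hcard]
        exact (Set.ncard_pos (Set.toFinite _)).mpr ⟨s(v, w), hadj⟩
      have := IH (n - 1) (by omega) _ (by rw [hKcard, hcard]) hKconn
      omega

/-- A connected graph on `n` vertices with `n - 1` edges is a tree. -/
lemma isTree_of_connected_card [Fintype V] (H : SimpleGraph V)
    (hconn : H.Connected) (hcard : H.edgeSet.ncard + 1 = Fintype.card V) :
    H.IsTree := by
  refine ⟨hconn, ?_⟩
  by_contra hac
  rw [isAcyclic_iff_forall_adj_isBridge] at hac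
  push_neg at hac
  obtain ⟨v, w, hadj, hnb⟩ := hac
  rw [isBridge_iff_adj_and_forall_walk_mem_edges] at hnb
  push_neg at hnb
  obtain ⟨q, hq⟩ := hnb
  have hKconn := connected_sdiff_of_walk hconn q hq
  have hKcard := ncard_sdiff_edge H hadj
  have hpos : 0 < H.edgeSet.ncard :=
    (Set.ncard_pos (Set.toFinite _)).mpr ⟨s(v, w), hadj⟩
  have := card_le_of_connected _ _ rfl hKconn
  omega

open scoped Classical in
lemma paramWeight_exchange [Fintype V] {d : ℕ} (cost : Sym2 V → Fin d → ℝ)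
    (p : Fin d → ℝ) (A B : SimpleGraph V) {e f : Sym2 V}
    (he : e ∈ A.edgeSet) (hf : f ∉ A.edgeSet)
    (hB : B.edgeSet = insert f A.edgeSet \ {e}) :
    paramWeight B cost p = paramWeight A cost p + dot (cost f) p - dot (cost e) p := by
  have hfe : f ≠ e := fun h => hf (h ▸ he)
  have hBF : B.edgeFinset = insert f (A.edgeFinset.erase e) := by
    ext g
    simp only [mem_edgeFinset, Finset.mem_insert, Finset.mem_erase, hB, Set.mem_diff,
      Set.mem_insert_iff, Set.mem_singleton_iff]
    constructor
    · rintro ⟨rfl | hg, hge⟩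
      · exact Or.inl rfl
      · exact Or.inr ⟨hge, hg⟩
    · rintro (rfl | ⟨hge, hg⟩)
      · exact ⟨Or.inl rfl, hfe⟩
      · exact ⟨Or.inr hg, hge⟩
  unfold paramWeight
  rw [hBF, Finset.sum_insert (fun h => hf (mem_edgeFinset.mp (Finset.mem_of_mem_erase h))),
    Finset.sum_erase_eq_sub (by rwa [mem_edgeFinset])]
  ring

open scoped Classical in
/-- Key exchange induction: if all swap inequalities are strict then `T` is the
unique minimum spanning tree. -/
lemma mst_key [Fintype V] [DecidableEq V] {d : ℕ}
    (G T : SimpleGraph V) (cost : Sym2 V → Fin d → ℝ)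
    (hT : IsSpanningTree G T) (p : Fin d → ℝ)
    (hineq : ∀ e f : Sym2 V, IsSwap G T e f → 0 < dot (cost f - cost e) p) :
    ∀ n (T' : SimpleGraph V), (T'.edgeSet \ T.edgeSet).ncard = n →
      IsSpanningTree G T' → T' ≠ T →
      paramWeight T cost p < paramWeight T' cost p := by
  intro n
  induction n using Nat.strong_induction_on with
  | _ n IH =>
  intro T' hn hT' hne
  have hcT : T.edgeSet.ncard + 1 = Fintype.card V := by
    have h1 := hT.2.card_edgeFinset
    rwa [← ncard_eq_card_edgeFinset] at h1
  have hcT' : T'.edgeSet.ncard + 1 = Fintype.card V := by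
    have h1 := hT'.2.card_edgeFinset
    rwa [← ncard_eq_card_edgeFinset] at h1
  -- find an edge of `T` not in `T'`
  have hTne : ¬ T.edgeSet ⊆ T'.edgeSet := by
    intro hsub
    exact hne (edgeSet_inj.mp
      (Set.eq_of_subset_of_ncard_le hsub (by omega) (Set.toFinite _))).symm
  obtain ⟨e, heT, heT'⟩ := Set.not_subset.mp hTne
  induction e using Sym2.ind with
  | _ x y =>
  have hAdj : T.Adj x y := (SimpleGraph.mem_edgeSet _).mp heT
  have hxy : x ≠ y := hAdj.ne
  have hbridge : ¬ (T \ fromEdgeSet {s(x, y)}).Reachable x y :=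
    (isBridge_iff.mp (isAcyclic_iff_forall_adj_isBridge.mp hT.2.IsAcyclic hAdj))
  have hsidesT := sides hT.2.isConnected.preconnected x y
  -- a path from x to y in T'
  obtain ⟨w0⟩ := hT'.2.isConnected.preconnected x y
  obtain ⟨u, v, hadj', hmemf, hPu, hPv⟩ :=
    exists_cross (fun a => (T \ fromEdgeSet {s(x, y)}).Reachable a x)
      (w0.toPath : T'.Walk x y) (Reachable.refl x) (fun h => hbridge h.symm)
  have hfT' : s(u, v) ∈ T'.edgeSet := hadj'
  have hfe : s(u, v) ≠ s(x, y) := fun h => heT' (h ▸ hfT')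
  have hfT : s(u, v) ∉ T.edgeSet := by
    intro hmem
    have hTduv : (T \ fromEdgeSet {s(x, y)}).Adj u v := by
      rw [sdiff_adj, fromEdgeSet_adj]
      exact ⟨(SimpleGraph.mem_edgeSet _).mp hmem, fun hc => hfe (by simpa using hc.1)⟩
    exact hPv (hTduv.symm.reachable.trans hPu)
  have huvne : u ≠ v := hadj'.ne
  -- the swapped tree H = T - e + f
  set H := fromEdgeSet (insert s(u, v) T.edgeSet \ {s(x, y)}) with hH
  have hHedge : H.edgeSet = insert s(u, v) T.edgeSet \ {s(x, y)} := by
    rw [hH, edgeSet_fromEdgeSet]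
    ext g
    constructor
    · rintro ⟨hg, -⟩
      exact hg
    · intro hg
      refine ⟨hg, ?_⟩
      change ¬ Sym2.IsDiag g
      rcases hg.1 with rfl | hgT
      · simpa [Sym2.mk_isDiag_iff] using huvne
      · exact T.not_isDiag_of_mem_edgeSet hgT
  have hHle : H ≤ G := by
    rw [← edgeSet_subset_edgeSet, hHedge]
    rintro g ⟨hg, -⟩
    rcases hg with rfl | hgT
    · exact edgeSet_mono hT'.1 hfT'
    · exact edgeSet_mono hT.1 hgT
  have hTdH : T \ fromEdgeSet {s(x, y)} ≤ H := by
    intro a b hab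
    rw [sdiff_adj, fromEdgeSet_adj] at hab
    obtain ⟨h1, h2⟩ := hab
    rw [hH, fromEdgeSet_adj]
    refine ⟨⟨Or.inr h1, ?_⟩, h1.ne⟩
    intro hc
    exact h2 ⟨by simpa using hc, h1.ne⟩
  have hHuv : H.Adj u v := by
    rw [hH, fromEdgeSet_adj]
    exact ⟨⟨Or.inl rfl, hfe⟩, huvne⟩
  have hTdvy : (T \ fromEdgeSet {s(x, y)}).Reachable v y := by
    rcases hsidesT v with h | h
    · exact absurd h hPv
    · exact h
  have hHconn : H.Connected := by
    have hnv : Nonempty V := hT.2.isConnected.nonempty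
    have hHyx : H.Reachable y x :=
      ((hTdvy.mono hTdH).symm.trans ((hHuv.symm.reachable).trans (hPu.mono hTdH)))
    have hxH : ∀ a, H.Reachable a x := by
      intro a
      rcases hsidesT a with h | h
      · exact h.mono hTdH
      · exact (h.mono hTdH).trans hHyx
    exact Connected.mk fun a b => (hxH a).trans (hxH b).symm
  have hHcard : H.edgeSet.ncard = T.edgeSet.ncard := by
    rw [hHedge, Set.ncard_diff_singleton_of_mem (Set.mem_insert_of_mem _ heT),
      Set.ncard_insert_of_notMem hfT (Set.toFinite _)]
    omega
  have hHtree : IsSpanningTree G H :=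
    ⟨hHle, isTree_of_connected_card H hHconn (by omega)⟩
  have hswap : IsSwap G T s(x, y) s(u, v) :=
    ⟨heT, edgeSet_mono hT'.1 hfT', hfT, hHtree⟩
  have hlt1 : dot (cost s(x, y)) p < dot (cost s(u, v)) p := by
    have h1 := hineq _ _ hswap
    rw [dot_sub] at h1
    linarith
  -- the other swapped tree T2 = T' - f + e
  set T2 := fromEdgeSet (insert s(x, y) T'.edgeSet \ {s(u, v)}) with hT2
  have hT2edge : T2.edgeSet = insert s(x, y) T'.edgeSet \ {s(u, v)} := by
    rw [hT2, edgeSet_fromEdgeSet]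
    ext g
    constructor
    · rintro ⟨hg, -⟩
      exact hg
    · intro hg
      refine ⟨hg, ?_⟩
      change ¬ Sym2.IsDiag g
      rcases hg.1 with rfl | hgT
      · simpa [Sym2.mk_isDiag_iff] using hxy
      · exact T'.not_isDiag_of_mem_edgeSet hgT
  -- x and y are separated in T' - f
  have hnotxy : ¬ (T' \ fromEdgeSet {s(u, v)}).Reachable x y := by
    rintro ⟨q0⟩
    have hq0sub : ∀ g ∈ (q0.toPath : (T' \ fromEdgeSet {s(u, v)}).Walk x y).edges,
        g ∈ T'.edgeSet := by
      intro g hg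
      have h1 := Walk.edges_subset_edgeSet _ hg
      rw [show (T' \ fromEdgeSet {s(u, v)}).edgeSet = T'.edgeSet \ {s(u, v)} from
        edgeSet_deleteEdges _] at h1
      exact h1.1
    set q1 := Walk.transfer (q0.toPath : (T' \ fromEdgeSet {s(u, v)}).Walk x y) T' hq0sub
      with hq1
    have hq1path : q1.IsPath := (q0.toPath.2).transfer _
    have hfq1 : s(u, v) ∉ q1.edges := by
      rw [hq1, Walk.edges_transfer]
      intro hmem
      have h1 := Walk.edges_subset_edgeSet _ hmem
      rw [show (T' \ fromEdgeSet {s(u, v)}).edgeSet = T'.edgeSet \ {s(u, v)} from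
        edgeSet_deleteEdges _] at h1
      exact h1.2 rfl
    have huniq := hT'.2.IsAcyclic.path_unique ⟨q1, hq1path⟩ w0.toPath
    have : s(u, v) ∈ q1.edges := by
      rw [show q1 = (w0.toPath : T'.Walk x y) from Subtype.ext_iff.mp huniq]
      exact hmemf
    exact hfq1 this
  have hbridge' : ¬ (T' \ fromEdgeSet {s(u, v)}).Reachable u v :=
    (isBridge_iff.mp (isAcyclic_iff_forall_adj_isBridge.mp hT'.2.IsAcyclic hadj'))
  have hsidesT' := sides hT'.2.isConnected.preconnected u v
  have hT'fT2 : T' \ fromEdgeSet {s(u, v)} ≤ T2 := by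
    intro a b hab
    rw [sdiff_adj, fromEdgeSet_adj] at hab
    obtain ⟨h1, h2⟩ := hab
    rw [hT2, fromEdgeSet_adj]
    refine ⟨⟨Or.inr h1, ?_⟩, h1.ne⟩
    intro hc
    exact h2 ⟨by simpa using hc, h1.ne⟩
  have hT2xy : T2.Adj x y := by
    rw [hT2, fromEdgeSet_adj]
    exact ⟨⟨Or.inl rfl, fun hc => hfe (by simpa using hc.symm)⟩, hxy⟩
  have hT2uv : T2.Reachable u v := by
    rcases hsidesT' x with hx | hx <;> rcases hsidesT' y with hy | hy
    · exact absurd (hx.trans hy.symm) hnotxy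
    · exact ((hx.mono hT'fT2).symm.trans
        (hT2xy.reachable.trans (hy.mono hT'fT2)))
    · exact ((hy.mono hT'fT2).symm.trans
        ((hT2xy.symm.reachable).trans (hx.mono hT'fT2)))
    · exact absurd (hx.trans hy.symm) hnotxy
  have hT2conn : T2.Connected := by
    have hnv : Nonempty V := hT.2.isConnected.nonempty
    refine Connected.mk ?_
    intro a b
    refine reach_transfer (fun s t hst => ?_) (hT'.2.isConnected.preconnected a b)
    by_cases hse : s(s, t) = s(u, v)
    · rw [Sym2.eq_iff] at hse
      rcases hse with ⟨rfl, rfl⟩ | ⟨rfl, rfl⟩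
      · exact hT2uv
      · exact hT2uv.symm
    · refine Adj.reachable ?_
      rw [hT2, fromEdgeSet_adj]
      refine ⟨⟨Or.inr hst, fun hc => hse (by simpa using hc)⟩, hst.ne⟩
  have hT2card : T2.edgeSet.ncard = T'.edgeSet.ncard := by
    rw [hT2edge, Set.ncard_diff_singleton_of_mem (Set.mem_insert_of_mem _ hfT'),
      Set.ncard_insert_of_notMem heT' (Set.toFinite _)]
    omega
  have hT2le : T2 ≤ G := by
    rw [← edgeSet_subset_edgeSet, hT2edge]
    rintro g ⟨hg, -⟩
    rcases hg with rfl | hgT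
    · exact edgeSet_mono hT.1 heT
    · exact edgeSet_mono hT'.1 hgT
  have hT2tree : IsSpanningTree G T2 :=
    ⟨hT2le, isTree_of_connected_card T2 hT2conn (by omega)⟩
  have hW2 : paramWeight T2 cost p =
      paramWeight T' cost p + dot (cost s(x, y)) p - dot (cost s(u, v)) p :=
    paramWeight_exchange cost p T' T2 hfT' heT' hT2edge
  have hdiff : T2.edgeSet \ T.edgeSet = (T'.edgeSet \ T.edgeSet) \ {s(u, v)} := by
    rw [hT2edge]
    ext g
    simp only [Set.mem_diff, Set.mem_insert_iff, Set.mem_singleton_iff]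
    constructor
    · rintro ⟨⟨rfl | hgT', hgf⟩, hgT⟩
      · exact absurd heT hgT
      · exact ⟨⟨hgT', hgT⟩, hgf⟩
    · rintro ⟨⟨hgT', hgT⟩, hgf⟩
      exact ⟨⟨Or.inr hgT', hgf⟩, hgT⟩
  have hfdiff : s(u, v) ∈ T'.edgeSet \ T.edgeSet := ⟨hfT', hfT⟩
  have hncard2 : (T2.edgeSet \ T.edgeSet).ncard = n - 1 := by
    rw [hdiff, Set.ncard_diff_singleton_of_mem hfdiff, hn]
  have hnpos : 0 < n := by
    rw [← hn]
    exact (Set.ncard_pos (Set.toFinite _)).mpr ⟨s(u, v), hfdiff⟩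
  by_cases hT2T : T2 = T
  · have hWT : paramWeight T cost p = paramWeight T2 cost p := by rw [hT2T]
    linarith
  · have hIH := IH (n - 1) (by omega) T2 hncard2 hT2tree hT2T
    linarith

end MSTAux

/-- The set of parameter vectors `p ∈ ℝ^d` for which `T` is the unique minimum
spanning tree under `w(e) = cost(e)·p` is exactly the solution set of the
strict inequalities `(cost f − cost e)·p > 0` over all swaps `(e,f)`, and
this set is convex. -/
theorem mst_parameter_region {V : Type*} [Fintype V] [DecidableEq V] {d : ℕ}
    (G T : SimpleGraph V) (cost : Sym2 V → Fin d → ℝ)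
    (hG : G.Connected) (hT : IsSpanningTree G T) :
    ({p : Fin d → ℝ |
        ∀ T' : SimpleGraph V, IsSpanningTree G T' → T' ≠ T →
          paramWeight T cost p < paramWeight T' cost p} =
      {p : Fin d → ℝ |
        ∀ e f : Sym2 V, IsSwap G T e f → 0 < dot (cost f - cost e) p}) ∧
    Convex ℝ {p : Fin d → ℝ |
        ∀ T' : SimpleGraph V, IsSpanningTree G T' → T' ≠ T →
          paramWeight T cost p < paramWeight T' cost p} := by
  have hset : {p : Fin d → ℝ |
        ∀ T' : SimpleGraph V, IsSpanningTree G T' → T' ≠ T →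
          paramWeight T cost p < paramWeight T' cost p} =
      {p : Fin d → ℝ |
        ∀ e f : Sym2 V, IsSwap G T e f → 0 < dot (cost f - cost e) p} := by
    ext p
    simp only [Set.mem_setOf_eq]
    constructor
    · intro hmin e f hswap
      obtain ⟨heT, hfG, hfT, hHtree⟩ := hswap
      have hfe : f ≠ e := fun h => hfT (h ▸ heT)
      have hHedge : (fromEdgeSet (insert f T.edgeSet \ {e})).edgeSet =
          insert f T.edgeSet \ {e} := by
        rw [edgeSet_fromEdgeSet]
        ext g
        constructor
        · rintro ⟨hg, -⟩
          exact hg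
        · intro hg
          refine ⟨hg, ?_⟩
          change ¬ Sym2.IsDiag g
          rcases hg.1 with rfl | hgT
          · exact G.not_isDiag_of_mem_edgeSet hfG
          · exact T.not_isDiag_of_mem_edgeSet hgT
      have hHne : fromEdgeSet (insert f T.edgeSet \ {e}) ≠ T := by
        intro h
        apply hfT
        rw [← h, hHedge]
        exact ⟨Or.inl rfl, hfe⟩
      have hlt := hmin _ hHtree hHne
      have hW := MSTAux.paramWeight_exchange cost p T _ heT hfT hHedge
      rw [MSTAux.dot_sub]
      linarith
    · intro hineq T' hT' hne
      exact MSTAux.mst_key G T cost hT p hineq _ T' rfl hT' hne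
  refine ⟨hset, ?_⟩
  rw [hset]
  have hrw : {p : Fin d → ℝ | ∀ e f : Sym2 V, IsSwap G T e f →
      0 < dot (cost f - cost e) p} =
      ⋂ e, ⋂ f, {p : Fin d → ℝ | IsSwap G T e f → 0 < dot (cost f - cost e) p} := by
    ext p
    simp [Set.mem_iInter]
  rw [hrw]
  refine convex_iInter fun e => convex_iInter fun f => ?_
  by_cases hs : IsSwap G T e f
  · have h2 : {p : Fin d → ℝ | IsSwap G T e f → 0 < dot (cost f - cost e) p} =
        {p : Fin d → ℝ | 0 < dot (cost f - cost e) p} := by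
      ext p
      simp [hs]
    rw [h2]
    exact convex_halfSpace_gt (MSTAux.dot_isLinearMap _) 0
  · have h2 : {p : Fin d → ℝ | IsSwap G T e f → 0 < dot (cost f - cost e) p} =
        Set.univ := by
      ext p
      simp [hs]
    rw [h2]
    exact convex_univ
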